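/- Let n = 2k+1 be an odd integer with n ≥ 3, and define integers a_1, …, a_{n−1} by: a_t = (−1)^{t+1} · t for 1 ≤ t ≤ k; a_t = (−1)^t · (n−1−t) for k+1 ≤ t ≤ n−2; and a_{n−1} = (−1)^k · k. Then the residues of a_1, …, a_{n−1} in ZMod n are pairwise distinct and nonzero (so they enumerate all nonzero elements of ZMod n), the partial sums s_0 = 0 and s_t = a_1 + ⋯ + a_t for 1 ≤ t ≤ n−2 are pairwise distinct modulo n, and a_1 + ⋯ + a_{n−1} ≡ 0 (mod n). -/

import Mathlib

private def AAseq : ℕ → ℤ := fun t => if t % 2 = 0 then -((t / 2 : ℕ) : ℤ) else ((t / 2 : ℕ) : ℤ) + 1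

private lemma AAseq_even (m : ℕ) : AAseq (m + m) = -(m : ℤ) := by
  have h2 : (m + m) % 2 = 0 := by omega
  have h3 : (m + m) / 2 = m := by omega
  simp [AAseq, h2, h3]

private lemma AAseq_odd (m : ℕ) : AAseq (2 * m + 1) = (m : ℤ) + 1 := by
  have h2 : (2 * m + 1) % 2 = 1 := by omega
  have h3 : (2 * m + 1) / 2 = m := by omega
  simp [AAseq, h2, h3]

private lemma AAseq_inj {s t : ℕ} (h : AAseq s = AAseq t) : s = t := by
  rcases Nat.even_or_odd s with ⟨x, rfl⟩ | ⟨x, rfl⟩ <;>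
  rcases Nat.even_or_odd t with ⟨y, rfl⟩ | ⟨y, rfl⟩ <;>
  simp only [AAseq_even, AAseq_odd] at h <;> omega

private lemma AAseq_bnd (t : ℕ) : -((t:ℤ)+1) ≤ 2 * AAseq t ∧ 2 * AAseq t ≤ (t:ℤ)+1 := by
  rcases Nat.even_or_odd t with ⟨x, rfl⟩ | ⟨x, rfl⟩ <;>
  simp only [AAseq_even, AAseq_odd] <;> omega

private lemma n1p_even (x : ℕ) : ((-1:ℤ))^(x+x) = 1 := Even.neg_one_pow ⟨x, rfl⟩
private lemma n1p_odd (x : ℕ) : ((-1:ℤ))^(x+x+1) = -1 := Odd.neg_one_pow ⟨x, by ring⟩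
private lemma n1p_odd' (x : ℕ) : ((-1:ℤ))^(2*x+1) = -1 := Odd.neg_one_pow ⟨x, rfl⟩
private lemma n1p_even' (x : ℕ) : ((-1:ℤ))^(2*x+1+1) = 1 := Even.neg_one_pow ⟨x+1, by ring⟩

private lemma AAseq_succ (t : ℕ) : AAseq (t+1) = AAseq t + (-1)^t * ((t:ℤ)+1) := by
  rcases Nat.even_or_odd t with ⟨x, rfl⟩ | ⟨x, rfl⟩
  · rw [show x + x + 1 = 2*x+1 from by ring, AAseq_odd, AAseq_even, n1p_even]
    push_cast; ring
  · rw [show 2*x + 1 + 1 = (x+1)+(x+1) from by ring, AAseq_even, AAseq_odd, n1p_odd']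
    push_cast; ring

private lemma sign_opp {a b N : ℕ} (h : a + b + 1 = 2 * N) : ((-1:ℤ))^a = -(-1)^b := by
  rcases Nat.even_or_odd a with ⟨x, rfl⟩ | ⟨x, rfl⟩ <;>
  rcases Nat.even_or_odd b with ⟨y, rfl⟩ | ⟨y, rfl⟩ <;>
  simp only [n1p_even, n1p_odd, n1p_odd'] <;> omega

private lemma AAseq_k (k : ℕ) (hk : 1 ≤ k) : AAseq k = (-1:ℤ)^(k+1) * k + AAseq (k-1) := by
  rcases Nat.even_or_odd k with ⟨z, rfl⟩ | ⟨z, rfl⟩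
  · rw [show z + z - 1 = 2*(z-1)+1 from by omega, AAseq_odd, AAseq_even, n1p_odd]
    omega
  · rw [show 2*z+1-1 = z+z from by omega, AAseq_even, AAseq_odd, n1p_even']
    omega

private lemma zmod_eq_dvd {n : ℕ} {x y : ℤ} (h : ((x:ℤ) : ZMod n) = (y : ZMod n)) :
    (n:ℤ) ∣ x - y := by
  have h0 : ((x - y : ℤ) : ZMod n) = 0 := by push_cast; rw [h]; ring
  exact (ZMod.intCast_zmod_eq_zero_iff_dvd _ _).mp h0

private lemma dvd_small {n : ℕ} {d : ℤ} (h : (n:ℤ) ∣ d) (h1 : -(n:ℤ) < d) (h2 : d < n) :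
    d = 0 := by
  rcases h with ⟨c, rfl⟩
  have hn : (0:ℤ) ≤ n := by positivity
  rcases lt_trichotomy c 0 with hc | hc | hc
  · nlinarith
  · simp [hc]
  · nlinarith

/-- For odd `n = 2k+1 ≥ 3`, the explicit sequence
`a_t = (-1)^{t+1}·t` for `1 ≤ t ≤ k`, `a_t = (-1)^t·(n-1-t)` for `k+1 ≤ t ≤ n-2`, and
`a_{n-1} = (-1)^k·k` has pairwise distinct nonzero residues mod `n` (enumerating all nonzero
elements of `ZMod n`), its partial sums `s_0, …, s_{n-2}` are pairwise distinct mod `n`, and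
the total sum is `≡ 0 (mod n)`. -/
theorem explicit_sequence_traces_nearHam_cycle (n k : ℕ) (hk : 1 ≤ k) (hn : n = 2 * k + 1)
    (a : ℕ → ℤ)
    (ha1 : ∀ t : ℕ, 1 ≤ t → t ≤ k → a t = (-1) ^ (t + 1) * t)
    (ha2 : ∀ t : ℕ, k + 1 ≤ t → t ≤ n - 2 → a t = (-1) ^ t * ((n : ℤ) - 1 - t))
    (ha3 : a (n - 1) = (-1) ^ k * k) :
    -- residues are nonzero
    (∀ t, 1 ≤ t → t ≤ n - 1 → ((a t : ZMod n) ≠ 0)) ∧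
    -- residues are pairwise distinct
    (∀ t₁ t₂, 1 ≤ t₁ → t₁ ≤ n - 1 → 1 ≤ t₂ → t₂ ≤ n - 1 →
      ((a t₁ : ZMod n) = (a t₂ : ZMod n)) → t₁ = t₂) ∧
    -- hence they enumerate all nonzero elements of `ZMod n`
    (∀ x : ZMod n, x ≠ 0 → ∃ t, 1 ≤ t ∧ t ≤ n - 1 ∧ (a t : ZMod n) = x) ∧
    -- partial sums s_0, …, s_{n-2} are pairwise distinct mod n
    (∀ t₁ t₂, t₁ ≤ n - 2 → t₂ ≤ n - 2 →
      (((∑ i ∈ Finset.Icc 1 t₁, a i : ℤ) : ZMod n) =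
        ((∑ i ∈ Finset.Icc 1 t₂, a i : ℤ) : ZMod n)) → t₁ = t₂) ∧
    -- the total sum is ≡ 0 (mod n)
    ((n : ℤ) ∣ ∑ i ∈ Finset.Icc 1 (n - 1), a i) := by
  subst hn
  have hn1 : 2 * k + 1 - 1 = 2 * k := by omega
  have hn2 : 2 * k + 1 - 2 = 2 * k - 1 := by omega
  rw [hn1] at ha3
  rw [hn1, hn2]
  -- explicit values by region
  have hmid : ∀ t, k + 1 ≤ t → t ≤ 2 * k - 1 → a t = (-1)^t * (2*(k:ℤ) - t) := by
    intro t h1 h2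
    rw [ha2 t h1 (by omega)]
    push_cast; ring
  have hval : ∀ t, 1 ≤ t → t ≤ 2*k →
      (t ≤ k ∧ a t = (-1)^(t+1) * t) ∨
      (k+1 ≤ t ∧ t ≤ 2*k-1 ∧ a t = (-1)^t * (2*(k:ℤ) - t)) ∨
      (t = 2*k ∧ a t = (-1)^k * k) := by
    intro t h1 h2
    by_cases h3 : t ≤ k
    · exact Or.inl ⟨h3, ha1 t h1 h3⟩
    by_cases h4 : t = 2*k
    · exact Or.inr (Or.inr ⟨h4, h4 ▸ ha3⟩)
    · exact Or.inr (Or.inl ⟨by omega, by omega, hmid t (by omega) (by omega)⟩)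
  -- bounds on values
  have hbound : ∀ t, 1 ≤ t → t ≤ 2*k → a t ≠ 0 ∧ -(k:ℤ) ≤ a t ∧ a t ≤ k := by
    intro t h1 h2
    rcases hval t h1 h2 with ⟨hb, he⟩ | ⟨hb, hb', he⟩ | ⟨hb, he⟩ <;>
      rw [he] <;> clear he <;>
      rcases Nat.even_or_odd t with ⟨x, rfl⟩ | ⟨x, rfl⟩ <;>
      rcases Nat.even_or_odd k with ⟨z, rfl⟩ | ⟨z, rfl⟩ <;>
      simp only [n1p_even, n1p_odd, n1p_even', n1p_odd'] <;> omega
  -- integer injectivity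
  have hint : ∀ t₁ t₂, 1 ≤ t₁ → t₁ ≤ 2*k → 1 ≤ t₂ → t₂ ≤ 2*k → a t₁ = a t₂ → t₁ = t₂ := by
    intro t₁ t₂ h11 h12 h21 h22 h
    rcases hval t₁ h11 h12 with ⟨hb1, he1⟩ | ⟨hb1, hb1', he1⟩ | ⟨hb1, he1⟩ <;>
      rcases hval t₂ h21 h22 with ⟨hb2, he2⟩ | ⟨hb2, hb2', he2⟩ | ⟨hb2, he2⟩ <;>
      rw [he1, he2] at h <;> clear he1 he2 <;>
      rcases Nat.even_or_odd t₁ with ⟨x, rfl⟩ | ⟨x, rfl⟩ <;>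
      rcases Nat.even_or_odd t₂ with ⟨y, rfl⟩ | ⟨y, rfl⟩ <;>
      rcases Nat.even_or_odd k with ⟨z, rfl⟩ | ⟨z, rfl⟩ <;>
      simp only [n1p_even, n1p_odd, n1p_even', n1p_odd'] at h <;> omega
  -- partial sums, first batch
  have hS1 : ∀ t, t ≤ k → (∑ i ∈ Finset.Icc 1 t, a i) = AAseq t := by
    intro t ht
    induction t with
    | zero => simp [AAseq]
    | succ t ih =>
      rw [Finset.sum_Icc_succ_top (by omega), ih (by omega),
        ha1 (t+1) (by omega) ht, AAseq_succ]
      have hsg : ((-1:ℤ))^(t+1+1) = (-1)^t := by rw [pow_succ, pow_succ]; ring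
      rw [hsg]; push_cast; ring
  -- partial sums, second batch
  have hS2 : ∀ t, k ≤ t → t ≤ 2*k-1 →
      (∑ i ∈ Finset.Icc 1 t, a i) = (-1)^(k+1) * (k:ℤ) + AAseq (2*k-1-t) := by
    intro t ht
    induction t, ht using Nat.le_induction with
    | base =>
      intro _
      rw [hS1 k le_rfl, show 2*k-1-k = k-1 from by omega]
      exact AAseq_k k hk
    | succ t ht ih =>
      intro h2
      rw [Finset.sum_Icc_succ_top (by omega), ih (by omega),
        hmid (t+1) (by omega) h2]
      have hu : 2*k-1-t = (2*k-2-t) + 1 := by omega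
      have hu2 : 2*k-1-(t+1) = 2*k-2-t := by omega
      rw [hu, hu2, AAseq_succ,
        sign_opp (show (t+1) + (2*k-2-t) + 1 = 2*k from by omega)]
      have hc : ((2*k-2-t : ℕ) : ℤ) + 1 = 2*(k:ℤ) - (↑(t+1):ℤ) := by push_cast; omega
      rw [← hc]; ring
  -- total sum
  have hStot : (∑ i ∈ Finset.Icc 1 (2*k), a i) = 0 := by
    rw [show 2*k = (2*k-1)+1 from by omega, Finset.sum_Icc_succ_top (by omega),
      hS2 (2*k-1) (by omega) le_rfl, show 2*k-1+1 = 2*k from by omega, ha3,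
      show 2*k-1-(2*k-1) = 0 from by omega]
    have h0 : AAseq 0 = 0 := by simp [AAseq]
    rw [h0, pow_succ]; ring
  refine ⟨?_, ?_, ?_, ?_, ?_⟩
  · -- nonzero residues
    intro t h1 h2 h0
    have hd : ((2*k+1 : ℕ):ℤ) ∣ a t := (ZMod.intCast_zmod_eq_zero_iff_dvd _ _).mp h0
    obtain ⟨hne, hlow, hhigh⟩ := hbound t h1 h2
    have := dvd_small hd (by omega) (by omega)
    exact hne this
  · -- injectivity of residues
    intro t₁ t₂ h11 h12 h21 h22 h
    have hd := zmod_eq_dvd h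
    obtain ⟨hne1, hl1, hh1⟩ := hbound t₁ h11 h12
    obtain ⟨hne2, hl2, hh2⟩ := hbound t₂ h21 h22
    have h0 : a t₁ - a t₂ = 0 := dvd_small hd (by omega) (by omega)
    exact hint t₁ t₂ h11 h12 h21 h22 (by omega)
  · -- surjectivity onto nonzero residues
    intro x hx
    haveI : NeZero (2*k+1) := ⟨by omega⟩
    classical
    set f : ℕ → ZMod (2*k+1) := fun t => ((a t : ℤ) : ZMod (2*k+1)) with hf
    have hinj : Set.InjOn f (Finset.Icc 1 (2*k)) := by
      intro s hs t ht hst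
      simp only [Finset.coe_Icc, Set.mem_Icc] at hs ht
      refine hint s t hs.1 hs.2 ht.1 ht.2 ?_
      have hd := zmod_eq_dvd (show ((a s : ℤ) : ZMod (2*k+1)) = ((a t : ℤ) : ZMod (2*k+1)) from hst)
      obtain ⟨hne1, hl1, hh1⟩ := hbound s hs.1 hs.2
      obtain ⟨hne2, hl2, hh2⟩ := hbound t ht.1 ht.2
      have h0 : a s - a t = 0 := dvd_small hd (by omega) (by omega)
      omega
    have hcard : ((Finset.Icc 1 (2*k)).image f).card = 2*k := by
      rw [Finset.card_image_of_injOn hinj, Nat.card_Icc]; omega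
    have hsub : (Finset.Icc 1 (2*k)).image f ⊆ Finset.univ.erase 0 := by
      intro y hy
      rcases Finset.mem_image.mp hy with ⟨t, ht, rfl⟩
      rw [Finset.mem_Icc] at ht
      refine Finset.mem_erase.mpr ⟨?_, Finset.mem_univ _⟩
      intro h0
      obtain ⟨hne, hl, hh⟩ := hbound t ht.1 ht.2
      have hd : ((2*k+1 : ℕ):ℤ) ∣ a t := (ZMod.intCast_zmod_eq_zero_iff_dvd _ _).mp h0
      exact hne (dvd_small hd (by omega) (by omega))
    have hcard2 : (Finset.univ.erase (0 : ZMod (2*k+1))).card = 2*k := by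
      rw [Finset.card_erase_of_mem (Finset.mem_univ _), Finset.card_univ, ZMod.card]; omega
    have heq := Finset.eq_of_subset_of_card_le hsub (by rw [hcard, hcard2])
    have hx' : x ∈ (Finset.Icc 1 (2*k)).image f := by
      rw [heq]; exact Finset.mem_erase.mpr ⟨hx, Finset.mem_univ _⟩
    rcases Finset.mem_image.mp hx' with ⟨t, ht, hfx⟩
    rw [Finset.mem_Icc] at ht
    exact ⟨t, ht.1, ht.2, hfx⟩
  · -- partial sums distinct
    intro t₁ t₂ h1 h2 h
    have hd := zmod_eq_dvd h
    have hcross : ∀ s u : ℕ, s ≤ k → u + 2 ≤ k →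
        AAseq s = (-1:ℤ)^(k+1) * k + AAseq u → False := by
      intro s u hs hu hEq
      rcases Nat.even_or_odd s with ⟨x, rfl⟩ | ⟨x, rfl⟩ <;>
      rcases Nat.even_or_odd u with ⟨y, rfl⟩ | ⟨y, rfl⟩ <;>
      rcases Nat.even_or_odd k with ⟨z, rfl⟩ | ⟨z, rfl⟩ <;>
      simp only [AAseq_even, AAseq_odd, n1p_even, n1p_odd, n1p_even', n1p_odd'] at hEq <;>
      omega
    rcases le_or_gt t₁ k with hc1 | hc1 <;> rcases le_or_gt t₂ k with hc2 | hc2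
    · rw [hS1 t₁ hc1, hS1 t₂ hc2] at hd
      obtain ⟨b1l, b1u⟩ := AAseq_bnd t₁
      obtain ⟨b2l, b2u⟩ := AAseq_bnd t₂
      have h0 : AAseq t₁ - AAseq t₂ = 0 := dvd_small hd (by omega) (by omega)
      exact AAseq_inj (by omega)
    · -- t₁ ≤ k < t₂
      exfalso
      rw [hS1 t₁ hc1, hS2 t₂ (by omega) h2] at hd
      obtain ⟨b1l, b1u⟩ := AAseq_bnd t₁
      obtain ⟨b2l, b2u⟩ := AAseq_bnd (2*k-1-t₂)
      have hsgn : ((-1:ℤ))^(k+1) = 1 ∨ ((-1:ℤ))^(k+1) = -1 := neg_one_pow_eq_or ℤ (k+1)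
      have h0 : AAseq t₁ - ((-1:ℤ)^(k+1) * k + AAseq (2*k-1-t₂)) = 0 := by
        refine dvd_small hd ?_ ?_ <;> rcases hsgn with hs | hs <;> rw [hs] at * <;> omega
      exact hcross t₁ (2*k-1-t₂) hc1 (by omega) (by omega)
    · -- t₂ ≤ k < t₁
      exfalso
      rw [hS2 t₁ (by omega) h1, hS1 t₂ hc2] at hd
      obtain ⟨b1l, b1u⟩ := AAseq_bnd (2*k-1-t₁)
      obtain ⟨b2l, b2u⟩ := AAseq_bnd t₂
      have hsgn : ((-1:ℤ))^(k+1) = 1 ∨ ((-1:ℤ))^(k+1) = -1 := neg_one_pow_eq_or ℤ (k+1)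
      have h0 : ((-1:ℤ)^(k+1) * k + AAseq (2*k-1-t₁)) - AAseq t₂ = 0 := by
        refine dvd_small hd ?_ ?_ <;> rcases hsgn with hs | hs <;> rw [hs] at * <;> omega
      exact hcross t₂ (2*k-1-t₁) hc2 (by omega) (by omega)
    · rw [hS2 t₁ (by omega) h1, hS2 t₂ (by omega) h2] at hd
      obtain ⟨b1l, b1u⟩ := AAseq_bnd (2*k-1-t₁)
      obtain ⟨b2l, b2u⟩ := AAseq_bnd (2*k-1-t₂)
      have hd' : ((2*k+1:ℕ):ℤ) ∣ AAseq (2*k-1-t₁) - AAseq (2*k-1-t₂) := by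
        have : ((-1:ℤ)^(k+1) * k + AAseq (2*k-1-t₁)) - ((-1:ℤ)^(k+1) * k + AAseq (2*k-1-t₂))
            = AAseq (2*k-1-t₁) - AAseq (2*k-1-t₂) := by ring
        rwa [this] at hd
      have h0 : AAseq (2*k-1-t₁) - AAseq (2*k-1-t₂) = 0 := dvd_small hd' (by omega) (by omega)
      have := AAseq_inj (show AAseq (2*k-1-t₁) = AAseq (2*k-1-t₂) from by omega)
      omega
  · rw [hStot]; exact dvd_zero _
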